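/- The generating function of plane partitions π with at most n rows and entries at most m, weighted by t^{des(π)} q^{|π|_{uh}} where des(π) = |Des(π)| and |π|_{uh} = Σ_{(i,j)∈Des(π)} (π_{ij} + i − 1), equals ∏_{i=1}^{m} ∏_{j=1}^{n} 1/(1 − t q^{i+j−1}). -/

import Mathlib

open scoped BigOperators

/-- A plane partition: a finitely supported `ℕ`-array (0-indexed) weakly
decreasing along rows and columns. -/
structure PlanePartition where
  entry : ℕ → ℕ → ℕ
  row_decr : ∀ i j, entry i (j + 1) ≤ entry i j
  col_decr : ∀ i j, entry (i + 1) j ≤ entry i j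
  finite_support : {p : ℕ × ℕ | entry p.1 p.2 ≠ 0}.Finite

namespace PlanePartition

/-- `π` has at most `n` (nonzero) rows. -/
def RowsLE (π : PlanePartition) (n : ℕ) : Prop := ∀ i j, n ≤ i → π.entry i j = 0

/-- `π` has at most `k` (nonzero) columns. -/
def ColsLE (π : PlanePartition) (k : ℕ) : Prop := ∀ i j, k ≤ j → π.entry i j = 0

/-- all entries of `π` are at most `m`. -/
def EntriesLE (π : PlanePartition) (m : ℕ) : Prop := ∀ i j, π.entry i j ≤ m

/-- The descent set of `π` (0-indexed cells). -/
def Des (π : PlanePartition) : Set (ℕ × ℕ) :=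
  {p | π.entry (p.1 + 1) p.2 < π.entry p.1 p.2}

/-- number of descents of `π`. -/
noncomputable def des (π : PlanePartition) : ℕ := π.Des.ncard

/-- `dmat π i ℓ` is the matrix entry `d_{i+1, ℓ+1}` of `Φ(π)`: the number of columns `j`
with `π_{ij} = ℓ+1 > π_{i+1,j}` (here `i`, `ℓ` are 0-indexed). -/
noncomputable def dmat (π : PlanePartition) (i ℓ : ℕ) : ℕ :=
  {j : ℕ | π.entry i j = ℓ + 1 ∧ π.entry (i + 1) j ≤ ℓ}.ncard

/-- the volume `|π|`. -/
noncomputable def vol (π : PlanePartition) : ℕ := ∑ᶠ p : ℕ × ℕ, π.entry p.1 p.2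

/-- the up-hook volume `|π|_{uh} = Σ_{(i,j) ∈ Des(π)} (π_{ij} + i - 1)` (1-indexed `i`;
in our 0-indexed convention the summand is `π.entry p.1 p.2 + p.1`). -/
noncomputable def uhvol (π : PlanePartition) : ℕ :=
  ∑ᶠ p ∈ π.Des, (π.entry p.1 p.2 + p.1)

/-- the corner volume `|π|_c = Σ_{(i,j) ∈ Des(π)} π_{ij}`. -/
noncomputable def cvol (π : PlanePartition) : ℕ :=
  ∑ᶠ p ∈ π.Des, π.entry p.1 p.2

/-- the trace `tr(π) = Σ_i π_{ii}`. -/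
noncomputable def trace (π : PlanePartition) : ℕ := ∑ᶠ i : ℕ, π.entry i i

/-- `colCount π v` is the number of columns of `π` containing the entry `v`. -/
noncomputable def colCount (π : PlanePartition) (v : ℕ) : ℕ :=
  {j : ℕ | ∃ i, π.entry i j = v}.ncard

/-- the length of row `i` (0-indexed) of `π`. -/
noncomputable def rowLen (π : PlanePartition) (i : ℕ) : ℕ :=
  {j : ℕ | π.entry i j ≠ 0}.ncard

/-- `π` is column-strict: entries strictly decrease down the columns (within the shape). -/
def ColStrict (π : PlanePartition) : Prop :=
  ∀ i j, π.entry i j ≠ 0 → π.entry (i + 1) j < π.entry i j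

/-- the shape of `π` is exactly the rectangle with `n` rows and `k` columns. -/
def ShapeRect (π : PlanePartition) (k n : ℕ) : Prop :=
  ∀ i j, π.entry i j ≠ 0 ↔ i < n ∧ j < k

end PlanePartition

/-- The Schur polynomial `s_{(k^n)}` of rectangular shape `(k^n)` in `N` variables
`x 0, …, x (N-1)`, defined via column-strict plane partitions of shape `(k^n)` with
entries at most `N`; the variable `x i` records entries equal to `i + 1`. -/
noncomputable def schurRect {R : Type*} [CommSemiring R] (k n N : ℕ) (x : ℕ → R) : R :=
  ∑ᶠ π ∈ {π : PlanePartition | π.ColStrict ∧ π.ShapeRect k n ∧ π.EntriesLE N},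
    ∏ i ∈ Finset.range N, x i ^ ({p : ℕ × ℕ | π.entry p.1 p.2 = i + 1}.ncard)


/-- finite downward-closed subsets of ℕ are initial segments -/
lemma mem_iff_lt_card (S : Finset ℕ) (h : ∀ v, v + 1 ∈ S → v ∈ S) (v : ℕ) :
    v ∈ S ↔ v < S.card := by
  have hdown : ∀ w d, w + d ∈ S → w ∈ S := by
    intro w d
    induction d with
    | zero => exact id
    | succ d ih => intro hw; exact ih (h _ (by rwa [show w + d + 1 = w + (d+1) by omega]))
  constructor
  · intro hv
    have hsub : Finset.range (v + 1) ⊆ S := by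
      intro w hw
      rw [Finset.mem_range] at hw
      have hwv : w + (v - w) = v := by omega
      exact hdown w (v - w) (by rwa [hwv])
    have := Finset.card_le_card hsub
    rw [Finset.card_range] at this
    omega
  · intro hv
    by_contra hvS
    have hsub : S ⊆ Finset.range v := by
      intro w hw
      rw [Finset.mem_range]
      by_contra hwv
      have hwv' : v + (w - v) = w := by omega
      exact hvS (hdown v (w - v) (by rwa [hwv']))
    have := Finset.card_le_card hsub
    rw [Finset.card_range] at this
    omega

lemma set_mem_iff_lt_ncard (S : Set ℕ) (hf : S.Finite) (h : ∀ v, v + 1 ∈ S → v ∈ S)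
    (v : ℕ) : v ∈ S ↔ v < S.ncard := by
  have := mem_iff_lt_card hf.toFinset (fun w hw => by
    simp only [Set.Finite.mem_toFinset] at *; exact h w hw) v
  rwa [Set.Finite.mem_toFinset, ← Set.ncard_eq_toFinset_card _ hf] at this

lemma nat_eq_of_lt_iff {x y : ℕ} (h : ∀ v, v < x ↔ v < y) : x = y := by
  rcases Nat.lt_trichotomy x y with h1 | h1 | h1
  · exact absurd ((h x).2 h1) (lt_irrefl x)
  · exact h1
  · exact absurd ((h y).1 h1) (lt_irrefl y)

/-- The height array built from a coefficient matrix `c`. -/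
def AA (n m : ℕ) (c : ℕ → ℕ → ℕ) (i v : ℕ) : ℕ :=
  if i < n ∧ v < m then
    c i v + max (AA n m c (i + 1) v) (AA n m c i (v + 1)) else 0
termination_by (n - i) + (m - v)
decreasing_by all_goals omega

lemma AA_eq_zero (n m : ℕ) (c : ℕ → ℕ → ℕ) {i v : ℕ} (h : n ≤ i ∨ m ≤ v) :
    AA n m c i v = 0 := by
  rw [AA]; rw [if_neg (by omega)]

lemma AA_rec (n m : ℕ) (c : ℕ → ℕ → ℕ) {i v : ℕ} (hi : i < n) (hv : v < m) :
    AA n m c i v = c i v + max (AA n m c (i + 1) v) (AA n m c i (v + 1)) := by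
  conv_lhs => rw [AA]
  rw [if_pos ⟨hi, hv⟩]

lemma AA_anti_v (n m : ℕ) (c : ℕ → ℕ → ℕ) (i v : ℕ) :
    AA n m c i (v + 1) ≤ AA n m c i v := by
  by_cases h : i < n ∧ v < m
  · rw [AA_rec n m c h.1 h.2]; omega
  · rw [AA_eq_zero n m c (by omega)]; exact Nat.zero_le _

lemma AA_anti_i (n m : ℕ) (c : ℕ → ℕ → ℕ) (i v : ℕ) :
    AA n m c (i + 1) v ≤ AA n m c i v := by
  by_cases h : i < n ∧ v < m
  · rw [AA_rec n m c h.1 h.2]; omega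
  · rw [AA_eq_zero n m c (i := i + 1) (by omega)]; exact Nat.zero_le _

/-- uniqueness of the recursion -/
lemma AA_unique (n m : ℕ) (c : ℕ → ℕ → ℕ) (B : ℕ → ℕ → ℕ)
    (hrec : ∀ i v, i < n → v < m → B i v = c i v + max (B (i + 1) v) (B i (v + 1)))
    (hzero : ∀ i v, n ≤ i ∨ m ≤ v → B i v = 0) :
    ∀ i v, B i v = AA n m c i v := by
  have key : ∀ k i v, (n - i) + (m - v) ≤ k → B i v = AA n m c i v := by
    intro k
    induction k with
    | zero => intro i v hk; rw [hzero i v (by omega), AA_eq_zero n m c (by omega)]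
    | succ k ih =>
      intro i v hk
      by_cases h : i < n ∧ v < m
      · rw [hrec i v h.1 h.2, AA_rec n m c h.1 h.2,
          ih (i + 1) v (by omega), ih i (v + 1) (by omega)]
      · rw [hzero i v (by omega), AA_eq_zero n m c (by omega)]
  intro i v
  exact key ((n - i) + (m - v)) i v le_rfl

section Build
variable (n m : ℕ) (c : ℕ → ℕ → ℕ)

/-- entries of the plane partition built from `c` -/
def ent (i j : ℕ) : ℕ := ((Finset.range m).filter (fun v => j < AA n m c i v)).card

lemma lt_ent_iff (i j v : ℕ) : v < ent n m c i j ↔ v < m ∧ j < AA n m c i v := by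
  unfold ent
  rw [← mem_iff_lt_card _ (fun w hw => ?_) v, Finset.mem_filter, Finset.mem_range]
  simp only [Finset.mem_filter, Finset.mem_range] at hw ⊢
  exact ⟨by omega, lt_of_lt_of_le hw.2 (AA_anti_v n m c i w)⟩

lemma ent_le_m (i j : ℕ) : ent n m c i j ≤ m := by
  have := Finset.card_filter_le (Finset.range m) (fun v => j < AA n m c i v)
  simpa [ent] using this

lemma ent_row_decr (i j : ℕ) : ent n m c i (j + 1) ≤ ent n m c i j :=
  Finset.card_le_card (fun v hv => by
    simp only [Finset.mem_filter] at hv ⊢; exact ⟨hv.1, by omega⟩)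

lemma ent_col_decr (i j : ℕ) : ent n m c (i + 1) j ≤ ent n m c i j :=
  Finset.card_le_card (fun v hv => by
    simp only [Finset.mem_filter] at hv ⊢
    exact ⟨hv.1, lt_of_lt_of_le hv.2 (AA_anti_i n m c i v)⟩)

lemma ent_support {i j : ℕ} (h : ent n m c i j ≠ 0) : i < n ∧ j < AA n m c i 0 := by
  have h0 : 0 < ent n m c i j := Nat.pos_of_ne_zero h
  rw [lt_ent_iff] at h0
  refine ⟨?_, h0.2⟩
  by_contra hi
  rw [AA_eq_zero n m c (Or.inl (by omega))] at h0
  omega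

/-- The plane partition built from `c`. -/
def build : PlanePartition where
  entry := ent n m c
  row_decr := ent_row_decr n m c
  col_decr := ent_col_decr n m c
  finite_support := by
    apply Set.Finite.subset
      (Set.finite_coe_iff.mp (inferInstance :
        Finite ↑(↑(Finset.range n ×ˢ Finset.range
          ((Finset.range n).sup (fun i => AA n m c i 0))) : Set (ℕ × ℕ))))
    intro p hp
    simp only [Set.mem_setOf_eq] at hp
    obtain ⟨h1, h2⟩ := ent_support n m c hp
    simp only [Finset.coe_product, Set.mem_prod, Finset.mem_coe, Finset.mem_range]
    exact ⟨h1, lt_of_lt_of_le h2 (Finset.le_sup (f := fun i => AA n m c i 0) (Finset.mem_range.mpr h1))⟩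

lemma build_rowsLE : (build n m c).RowsLE n := by
  intro i j hi
  by_contra h
  exact absurd (ent_support n m c h).1 (by omega)

lemma build_entriesLE : (build n m c).EntriesLE m := fun i j => ent_le_m n m c i j

end Build

section Heights
variable (π : PlanePartition)

lemma entry_anti_row (i : ℕ) : ∀ {j j' : ℕ}, j ≤ j' → π.entry i j' ≤ π.entry i j := by
  intro j j' h
  induction j' with
  | zero => simp_all
  | succ j' ih =>
    rcases Nat.lt_or_ge j (j' + 1) with h1 | h1
    · exact le_trans (π.row_decr i j') (ih (by omega))
    · have : j = j' + 1 := by omega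
      subst this; rfl

lemma entry_anti_col (j : ℕ) : ∀ {i i' : ℕ}, i ≤ i' → π.entry i' j ≤ π.entry i j := by
  intro i i' h
  induction i' with
  | zero => simp_all
  | succ i' ih =>
    rcases Nat.lt_or_ge i (i' + 1) with h1 | h1
    · exact le_trans (π.col_decr i' j) (ih (by omega))
    · have : i = i' + 1 := by omega
      subst this; rfl

lemma row_set_finite (i v : ℕ) : {j : ℕ | v + 1 ≤ π.entry i j}.Finite := by
  apply Set.Finite.subset (Set.Finite.image Prod.snd π.finite_support)
  intro j hj
  exact ⟨(i, j), by simp only [Set.mem_setOf_eq] at hj ⊢; omega, rfl⟩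

/-- the column-height array of a plane partition -/
noncomputable def hgt (i v : ℕ) : ℕ := {j : ℕ | v + 1 ≤ π.entry i j}.ncard

lemma lt_hgt_iff (i v j : ℕ) : j < hgt π i v ↔ v + 1 ≤ π.entry i j := by
  unfold hgt
  rw [← set_mem_iff_lt_ncard _ (row_set_finite π i v) (fun w hw => ?_) j]
  · rfl
  · simp only [Set.mem_setOf_eq] at hw ⊢
    exact le_trans hw (entry_anti_row π i (Nat.le_succ w))

lemma hgt_anti_v (i v : ℕ) : hgt π i (v + 1) ≤ hgt π i v := by
  rcases Nat.eq_zero_or_pos (hgt π i (v + 1)) with h | h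
  · omega
  · have := (lt_hgt_iff π i (v + 1) (hgt π i (v + 1) - 1)).1 (by omega)
    have := (lt_hgt_iff π i v (hgt π i (v + 1) - 1)).2 (by omega)
    -- this gives hgt π i (v+1) - 1 < hgt π i v
    omega

lemma hgt_anti_i (i v : ℕ) : hgt π (i + 1) v ≤ hgt π i v := by
  rcases Nat.eq_zero_or_pos (hgt π (i + 1) v) with h | h
  · omega
  · have h1 := (lt_hgt_iff π (i + 1) v (hgt π (i + 1) v - 1)).1 (by omega)
    have h2 := π.col_decr i (hgt π (i + 1) v - 1)
    have := (lt_hgt_iff π i v (hgt π (i + 1) v - 1)).2 (by omega)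
    omega

/-- the descent-count matrix -/
noncomputable def dm (i v : ℕ) : ℕ := hgt π i v - max (hgt π (i + 1) v) (hgt π i (v + 1))

variable {n m : ℕ}

lemma hgt_zero_of_row (hrow : π.RowsLE n) {i v : ℕ} (hi : n ≤ i) : hgt π i v = 0 := by
  unfold hgt
  convert Set.ncard_empty ℕ
  ext j
  simp only [Set.mem_setOf_eq, Set.mem_empty_iff_false, iff_false]
  rw [hrow i j hi]; omega

lemma hgt_zero_of_ent (hent : π.EntriesLE m) {i v : ℕ} (hv : m ≤ v) : hgt π i v = 0 := by
  unfold hgt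
  convert Set.ncard_empty ℕ
  ext j
  simp only [Set.mem_setOf_eq, Set.mem_empty_iff_false, iff_false]
  have := hent i j; omega

/-- the height array satisfies the `AA` recursion with coefficients `dm` -/
lemma hgt_eq_AA (hrow : π.RowsLE n) (hent : π.EntriesLE m) : ∀ i v, hgt π i v = AA n m (dm π) i v := by
  apply AA_unique
  · intro i v _ _
    have h1 := hgt_anti_i π i v
    have h2 := hgt_anti_v π i v
    unfold dm
    omega
  · intro i v h
    rcases h with h | h
    · exact hgt_zero_of_row π hrow h
    · exact hgt_zero_of_ent π hent h


/-- reconstruction: building from `dm π` recovers `π`'s entries -/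
lemma build_dm_entry (hrow : π.RowsLE n) (hent : π.EntriesLE m) : ∀ i j, ent n m (dm π) i j = π.entry i j := by
  intro i j
  apply nat_eq_of_lt_iff
  intro v
  rw [lt_ent_iff, ← hgt_eq_AA π hrow hent, lt_hgt_iff]
  have := hent i j
  omega

end Heights

section RoundTrip
variable (n m : ℕ) (c : ℕ → ℕ → ℕ)

/-- heights of the built plane partition are `AA` -/
lemma hgt_build : ∀ i v, hgt (build n m c) i v = AA n m c i v := by
  intro i v
  apply nat_eq_of_lt_iff
  intro j
  rw [lt_hgt_iff]
  show v + 1 ≤ ent n m c i j ↔ j < AA n m c i v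
  rw [show (v + 1 ≤ ent n m c i j) ↔ (v < ent n m c i j) from by omega, lt_ent_iff]
  rw [Iff.comm]
  constructor
  · intro h
    refine ⟨?_, h⟩
    by_contra hv
    rw [AA_eq_zero n m c (by omega)] at h; omega
  · exact fun h => h.2

lemma dm_build {i v : ℕ} (hi : i < n) (hv : v < m) : dm (build n m c) i v = c i v := by
  unfold dm
  rw [hgt_build, hgt_build, hgt_build, AA_rec n m c hi hv]
  omega

end RoundTrip

lemma PlanePartition.exta {π ρ : PlanePartition} (h : π.entry = ρ.entry) : π = ρ := by
  cases π; cases ρ; cases h; rfl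

lemma AA_anti_v_le (n m : ℕ) (c : ℕ → ℕ → ℕ) (i : ℕ) {v w : ℕ} (h : v ≤ w) :
    AA n m c i w ≤ AA n m c i v := by
  induction w with
  | zero => simp_all
  | succ w ih =>
    rcases Nat.lt_or_ge v (w + 1) with h1 | h1
    · exact le_trans (AA_anti_v n m c i w) (ih (by omega))
    · have : v = w + 1 := by omega
      subst this; rfl

section DesSet
variable (n m : ℕ) (c : ℕ → ℕ → ℕ)

/-- descents of the built plane partition, as a finset -/
def Dfin : Finset (ℕ × ℕ) :=
  (Finset.range n ×ˢ Finset.range m).biUnion (fun p =>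
    {p.1} ×ˢ Finset.Ico (max (AA n m c (p.1 + 1) p.2) (AA n m c p.1 (p.2 + 1)))
      (AA n m c p.1 p.2))

lemma mem_Dfin_iff (i j : ℕ) : (i, j) ∈ Dfin n m c ↔
    ∃ v < m, i < n ∧ max (AA n m c (i + 1) v) (AA n m c i (v + 1)) ≤ j ∧
      j < AA n m c i v := by
  simp only [Dfin, Finset.mem_biUnion, Finset.mem_product, Finset.mem_range,
    Finset.mem_singleton, Finset.mem_Ico, Prod.exists]
  constructor
  · rintro ⟨x, v, ⟨hx, hv⟩, rfl, h1, h2⟩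
    exact ⟨v, hv, hx, h1, h2⟩
  · rintro ⟨v, hv, hi, h1, h2⟩
    exact ⟨i, v, ⟨hi, hv⟩, rfl, h1, h2⟩

lemma Des_build : (build n m c).Des = ↑(Dfin n m c) := by
  ext ⟨i, j⟩
  show ent n m c (i + 1) j < ent n m c i j ↔ _
  rw [Finset.mem_coe, mem_Dfin_iff]
  constructor
  · intro hdes
    set t := ent n m c i j with ht
    have ht1 : 1 ≤ t := by omega
    have hv := (lt_ent_iff n m c i j (t - 1)).1 (by omega)
    have hvm : t - 1 < m := hv.1
    have hin : i < n := by
      by_contra hin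
      rw [AA_eq_zero n m c (Or.inl (by omega))] at hv
      omega
    refine ⟨t - 1, hvm, hin, ?_, hv.2⟩
    have h2 : ¬ (t - 1 < ent n m c (i + 1) j) := by omega
    rw [lt_ent_iff] at h2
    push_neg at h2
    have h3 : AA n m c (i + 1) (t - 1) ≤ j := by
      have := h2 hvm; omega
    have h4 : AA n m c i (t - 1 + 1) ≤ j := by
      by_cases hm : t - 1 + 1 < m
      · have h5 : ¬ (t - 1 + 1 < t) := by omega
        rw [lt_ent_iff] at h5
        push_neg at h5
        have := h5 hm; omega
      · rw [AA_eq_zero n m c (Or.inr (by omega))]; omega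
    omega
  · rintro ⟨v, hv, hi, h1, h2⟩
    have hlt : v < ent n m c i j := (lt_ent_iff n m c i j v).2 ⟨hv, h2⟩
    have hle : ¬ (v < ent n m c (i + 1) j) := by
      rw [lt_ent_iff]
      push_neg
      intro _
      omega
    omega

lemma Dfin_disjoint : (↑(Finset.range n ×ˢ Finset.range m) :
      Set (ℕ × ℕ)).PairwiseDisjoint (fun p =>
    {p.1} ×ˢ Finset.Ico (max (AA n m c (p.1 + 1) p.2) (AA n m c p.1 (p.2 + 1)))
      (AA n m c p.1 p.2)) := by
  rintro ⟨i, v⟩ _ ⟨i', v'⟩ _ hne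
  simp only [Function.onFun, Finset.disjoint_left]
  rintro ⟨x, j⟩ hx hx'
  simp only [Finset.mem_product, Finset.mem_singleton, Finset.mem_Ico] at hx hx'
  obtain ⟨he1, hj1, hj2⟩ := hx
  obtain ⟨he2, hj1', hj2'⟩ := hx'
  have hii : i = i' := by rw [← he1, ← he2]
  have hvv : v ≠ v' := fun h => hne (by simp [Prod.ext_iff, hii, h])
  rw [← hii] at hj1' hj2'
  rcases Nat.lt_or_ge v v' with h | h
  · have := AA_anti_v_le n m c i (show v + 1 ≤ v' by omega)
    omega
  · have := AA_anti_v_le n m c i (show v' + 1 ≤ v by omega)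
    omega

lemma ent_on_interval {i v j : ℕ} (hv : v < m)
    (h1 : max (AA n m c (i + 1) v) (AA n m c i (v + 1)) ≤ j) (h2 : j < AA n m c i v) :
    ent n m c i j = v + 1 := by
  have ha : v < ent n m c i j := (lt_ent_iff n m c i j v).2 ⟨hv, h2⟩
  have hb : ¬ (v + 1 < ent n m c i j) := by
    rw [lt_ent_iff]; push_neg; intro _; omega
  omega

lemma des_build : (build n m c).des =
    ∑ p ∈ Finset.range n ×ˢ Finset.range m, c p.1 p.2 := by
  unfold PlanePartition.des
  rw [Des_build, Set.ncard_coe_finset, Dfin, Finset.card_biUnion]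
  · apply Finset.sum_congr rfl
    rintro ⟨i, v⟩ hp
    dsimp only
    simp only [Finset.mem_product, Finset.mem_range] at hp
    rw [Finset.card_product, Finset.card_singleton, one_mul, Nat.card_Ico,
      AA_rec n m c hp.1 hp.2]
    omega
  · intro p hp q hq hne
    exact Dfin_disjoint n m c (by simpa using hp) (by simpa using hq) hne

lemma uhvol_build : (build n m c).uhvol =
    ∑ p ∈ Finset.range n ×ˢ Finset.range m, c p.1 p.2 * (p.1 + p.2 + 1) := by
  unfold PlanePartition.uhvol
  rw [Des_build, finsum_mem_coe_finset, Dfin,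
    Finset.sum_biUnion (Dfin_disjoint n m c)]
  apply Finset.sum_congr rfl
  rintro ⟨i, v⟩ hp
  dsimp only
  simp only [Finset.mem_product, Finset.mem_range] at hp
  rw [Finset.sum_product]
  simp only [Finset.sum_singleton]
  have hent : ∀ j ∈ Finset.Ico (max (AA n m c (i + 1) v) (AA n m c i (v + 1)))
      (AA n m c i v), (build n m c).entry i j + i = v + 1 + i := by
    intro j hj
    rw [Finset.mem_Ico] at hj
    show ent n m c i j + i = v + 1 + i
    rw [ent_on_interval n m c hp.2 hj.1 hj.2]
  rw [Finset.sum_congr rfl hent, Finset.sum_const, Nat.card_Ico,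
    AA_rec n m c hp.1 hp.2, smul_eq_mul]
  have hx : c i v + max (AA n m c (i + 1) v) (AA n m c i (v + 1)) -
      max (AA n m c (i + 1) v) (AA n m c i (v + 1)) = c i v := by omega
  rw [hx]
  ring

end DesSet

section MainEquiv
variable (n m a b : ℕ)

lemma AA_congr (c c' : ℕ → ℕ → ℕ) (h : ∀ i v, i < n → v < m → c i v = c' i v) :
    ∀ i v, AA n m c i v = AA n m c' i v := by
  apply AA_unique
  · intro i v hi hv
    rw [AA_rec n m c hi hv, h i v hi hv]
  · intro i v hiv
    exact AA_eq_zero n m c hiv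

/-- extend a matrix on `Fin n × Fin m` by zero -/
def extendc (c : Fin n × Fin m → ℕ) : ℕ → ℕ → ℕ := fun i v =>
  if h : i < n ∧ v < m then c (⟨i, h.1⟩, ⟨v, h.2⟩) else 0

lemma sum_prod_range (F : ℕ → ℕ → ℕ) :
    ∑ p ∈ Finset.range n ×ˢ Finset.range m, F p.1 p.2 =
      ∑ p : Fin n × Fin m, F p.1 p.2 := by
  rw [Finset.sum_product, Fintype.sum_prod_type]
  rw [← Fin.sum_univ_eq_sum_range (fun i => ∑ j ∈ Finset.range m, F i j) n]
  apply Finset.sum_congr rfl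
  intro i _
  rw [← Fin.sum_univ_eq_sum_range (fun j => F i j) m]

lemma sum_extendc (c : Fin n × Fin m → ℕ) (w : ℕ → ℕ → ℕ) :
    ∑ p ∈ Finset.range n ×ˢ Finset.range m, extendc n m c p.1 p.2 * w p.1 p.2 =
      ∑ p : Fin n × Fin m, c p * w p.1 p.2 := by
  rw [sum_prod_range n m (fun i v => extendc n m c i v * w i v)]
  apply Finset.sum_congr rfl
  rintro ⟨i, v⟩ _
  have : extendc n m c ↑i ↑v = c (i, v) := by
    unfold extendc
    rw [dif_pos ⟨i.isLt, v.isLt⟩]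
  rw [this]

/-- the two subtypes in bijection -/
noncomputable def mainEquiv :
    {π : PlanePartition // π.RowsLE n ∧ π.EntriesLE m ∧ π.des = a ∧ π.uhvol = b} ≃
    {c : Fin n × Fin m → ℕ //
      (∑ p : Fin n × Fin m, c p) = a ∧
      (∑ p : Fin n × Fin m, c p * (↑p.1 + ↑p.2 + 1)) = b} where
  toFun π := by
    refine ⟨fun p => dm π.1 ↑p.1 ↑p.2, ?_, ?_⟩
    · obtain ⟨π, hr, he, hd, hu⟩ := π
      have hb : π = build n m (dm π) :=
        PlanePartition.exta (funext fun i => funext fun j =>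
          (build_dm_entry π hr he i j).symm)
      have := des_build n m (dm π)
      rw [← hb] at this
      rw [← sum_prod_range n m (fun i v => dm π i v), ← this, hd]
    · obtain ⟨π, hr, he, hd, hu⟩ := π
      have hb : π = build n m (dm π) :=
        PlanePartition.exta (funext fun i => funext fun j =>
          (build_dm_entry π hr he i j).symm)
      have := uhvol_build n m (dm π)
      rw [← hb] at this
      rw [show (∑ p : Fin n × Fin m, dm π ↑p.1 ↑p.2 * (↑p.1 + ↑p.2 + 1)) =
        ∑ p ∈ Finset.range n ×ˢ Finset.range m, dm π p.1 p.2 * (p.1 + p.2 + 1) from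
        (sum_prod_range n m (fun i v => dm π i v * (i + v + 1))).symm, ← this, hu]
  invFun c := by
    refine ⟨build n m (extendc n m c.1), build_rowsLE n m _, build_entriesLE n m _, ?_, ?_⟩
    · rw [des_build]
      have := sum_extendc n m c.1 (fun _ _ => 1)
      simp only [mul_one] at this
      rw [this, c.2.1]
    · rw [uhvol_build, sum_extendc n m c.1 (fun i v => i + v + 1), c.2.2]
  left_inv := by
    rintro ⟨π, hr, he, hd, hu⟩
    apply Subtype.ext
    apply PlanePartition.exta
    show ent n m (extendc n m (fun p => dm π ↑p.1 ↑p.2)) = π.entry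
    funext i j
    have hAA : ∀ i v, AA n m (extendc n m (fun p => dm π ↑p.1 ↑p.2)) i v =
        AA n m (dm π) i v := by
      apply AA_congr
      intro i v hi hv
      unfold extendc
      rw [dif_pos ⟨hi, hv⟩]
    unfold ent
    simp only [hAA]
    exact build_dm_entry π hr he i j
  right_inv := by
    rintro ⟨c, hc1, hc2⟩
    apply Subtype.ext
    funext p
    show dm (build n m (extendc n m c)) ↑p.1 ↑p.2 = c p
    rw [dm_build n m _ p.1.isLt p.2.isLt]
    unfold extendc
    rw [dif_pos ⟨p.1.isLt, p.2.isLt⟩]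

end MainEquiv

section Series
open MvPowerSeries

/-- geometric series in `X 0 * X 1 ^ k` -/
noncomputable def G (k : ℕ) : MvPowerSeries (Fin 2) ℚ :=
  fun e => if e 1 = k * e 0 then 1 else 0

lemma coeff_G (k : ℕ) (e : Fin 2 →₀ ℕ) :
    MvPowerSeries.coeff e (G k) = if e 1 = k * e 0 then 1 else 0 := rfl

lemma finsupp_fin2_ext {e f : Fin 2 →₀ ℕ} (h0 : e 0 = f 0) (h1 : e 1 = f 1) : e = f := by
  ext i
  fin_cases i
  · exact h0
  · exact h1

lemma XXk_eq (k : ℕ) : (MvPowerSeries.X 0 * (MvPowerSeries.X 1) ^ k :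
    MvPowerSeries (Fin 2) ℚ) =
    monomial (Finsupp.single 0 1 + Finsupp.single 1 k) 1 := by
  rw [X_def, X_pow_eq, monomial_mul_monomial, one_mul]

lemma G_mul (k : ℕ) :
    G k * (1 - MvPowerSeries.X 0 * (MvPowerSeries.X 1) ^ k) = 1 := by
  ext e
  rw [mul_sub, mul_one, map_sub, mul_comm (G k), XXk_eq]
  rw [coeff_monomial_mul]
  rw [coeff_G, MvPowerSeries.coeff_one]
  set d := (Finsupp.single 0 1 + Finsupp.single 1 k : Fin 2 →₀ ℕ) with hd
  have hd0 : d 0 = 1 := by simp [hd, Finsupp.single_apply]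
  have hd1 : d 1 = k := by simp [hd, Finsupp.single_apply]
  have hle : d ≤ e ↔ 1 ≤ e 0 ∧ k ≤ e 1 := by
    rw [Finsupp.le_def]
    constructor
    · intro h
      refine ⟨?_, ?_⟩
      · have := h 0; rwa [hd0] at this
      · have := h 1; rwa [hd1] at this
    · intro h i
      fin_cases i
      · simpa [hd0] using h.1
      · simpa [hd1] using h.2
  have hsub0 : (e - d) 0 = e 0 - 1 := by rw [Finsupp.tsub_apply, hd0]
  have hsub1 : (e - d) 1 = e 1 - k := by rw [Finsupp.tsub_apply, hd1]
  have he0 : (e = 0) ↔ (e 0 = 0 ∧ e 1 = 0) := by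
    constructor
    · intro h; simp [h]
    · intro h; exact finsupp_fin2_ext (by simp [h.1]) (by simp [h.2])
  by_cases hc : d ≤ e
  · rw [if_pos hc, one_mul, coeff_G, hsub0, hsub1]
    rw [hle] at hc
    by_cases h1 : e 1 = k * e 0
    · rw [if_pos h1, if_pos, if_neg, sub_self]
      · rw [he0]; omega
      · rcases hc with ⟨hc0, hc1⟩
        obtain ⟨x, hx⟩ : ∃ x, e 0 = x + 1 := ⟨e 0 - 1, by omega⟩
        rw [h1, hx, Nat.add_sub_cancel, Nat.mul_add, mul_one, Nat.add_sub_cancel]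
    · rw [if_neg h1, if_neg, if_neg, sub_zero]
      · rw [he0]
        intro ⟨a1, a2⟩
        rw [hle] at *
        omega
      · intro hcon
        apply h1
        rcases hc with ⟨hc0, hc1⟩
        obtain ⟨x, hx⟩ : ∃ x, e 0 = x + 1 := ⟨e 0 - 1, by omega⟩
        rw [hx] at hcon ⊢
        rw [Nat.add_sub_cancel] at hcon
        rw [Nat.mul_add, mul_one]
        omega
  · rw [if_neg hc, sub_zero]
    rw [hle] at hc
    push_neg at hc
    by_cases h1 : e 1 = k * e 0
    · rw [if_pos h1]
      have he00 : e 0 = 0 := by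
        by_contra h
        have h0 : 1 ≤ e 0 := by omega
        have := hc h0
        rw [h1] at this
        nlinarith [Nat.one_le_iff_ne_zero.mpr h]
      rw [if_pos]
      rw [he0]
      refine ⟨he00, by rw [h1, he00, Nat.mul_zero]⟩
    · rw [if_neg h1, if_neg]
      rw [he0]
      intro ⟨a1, a2⟩
      exact h1 (by rw [a1, a2, Nat.mul_zero])

lemma inv_eq_G (k : ℕ) :
    (1 - MvPowerSeries.X 0 * (MvPowerSeries.X 1) ^ k : MvPowerSeries (Fin 2) ℚ)⁻¹ = G k := by
  rw [MvPowerSeries.inv_eq_iff_mul_eq_one]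
  · exact G_mul k
  · rw [map_sub, map_one, XXk_eq, ← coeff_zero_eq_constantCoeff, coeff_monomial]
    rw [if_neg, sub_zero]
    · exact one_ne_zero
    · intro h
      have := DFunLike.congr_fun h (0 : Fin 2)
      simp [Finsupp.single_apply] at this

end Series

section Counting
open MvPowerSeries Finset
variable (n m a b : ℕ)

/-- the target Finset of finsupp decompositions -/
noncomputable def Tfin : Finset ((ℕ × ℕ) →₀ (Fin 2 →₀ ℕ)) := by
  classical
  exact ((Finset.range m ×ˢ Finset.range n).finsuppAntidiag
      (Finsupp.single 0 a + Finsupp.single 1 b)).filter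
    (fun l => ∀ p ∈ Finset.range m ×ˢ Finset.range n,
      (l p) 1 = (p.1 + p.2 + 1) * (l p) 0)

lemma coeff_eq_card :
    MvPowerSeries.coeff (Finsupp.single 0 a + Finsupp.single 1 b : Fin 2 →₀ ℕ)
      (∏ i ∈ Finset.range m, ∏ j ∈ Finset.range n,
        (1 - MvPowerSeries.X 0 * (MvPowerSeries.X 1) ^ (i + j + 1) :
          MvPowerSeries (Fin 2) ℚ)⁻¹) = (Tfin n m a b).card := by
  classical
  have h1 : (∏ i ∈ Finset.range m, ∏ j ∈ Finset.range n,
        (1 - MvPowerSeries.X 0 * (MvPowerSeries.X 1) ^ (i + j + 1) :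
          MvPowerSeries (Fin 2) ℚ)⁻¹) =
      ∏ p ∈ Finset.range m ×ˢ Finset.range n, G (p.1 + p.2 + 1) := by
    rw [Finset.prod_product]
    apply Finset.prod_congr rfl
    intro i _
    apply Finset.prod_congr rfl
    intro j _
    exact inv_eq_G (i + j + 1)
  rw [h1, MvPowerSeries.coeff_prod]
  have h2 : ∀ l ∈ (Finset.range m ×ˢ Finset.range n).finsuppAntidiag
      (Finsupp.single 0 a + Finsupp.single 1 b),
      (∏ p ∈ Finset.range m ×ˢ Finset.range n,
        MvPowerSeries.coeff (l p) (G (p.1 + p.2 + 1))) =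
      if (∀ p ∈ Finset.range m ×ˢ Finset.range n,
        (l p) 1 = (p.1 + p.2 + 1) * (l p) 0) then (1 : ℚ) else 0 := by
    intro l _
    rw [← Finset.prod_boole]
    apply Finset.prod_congr rfl
    intro p _
    rw [coeff_G]
  rw [Finset.sum_congr rfl h2, Finset.sum_boole]
  rfl

lemma sum_transfer (F : ℕ → ℕ → ℕ) :
    ∑ p ∈ Finset.range m ×ˢ Finset.range n, F p.1 p.2 =
      ∑ p : Fin n × Fin m, F ↑p.2 ↑p.1 := by
  rw [Finset.sum_product, Fintype.sum_prod_type, Finset.sum_comm,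
    ← Fin.sum_univ_eq_sum_range (fun r => ∑ v ∈ Finset.range m, F v r) n]
  apply Finset.sum_congr rfl
  intro r _
  rw [← Fin.sum_univ_eq_sum_range (fun v => F v ↑r) m]

end Counting

section FinalEquiv
open Finset
variable (n m a b : ℕ)

lemma mem_Tfin (l : (ℕ × ℕ) →₀ (Fin 2 →₀ ℕ)) : l ∈ Tfin n m a b ↔
    ((∑ p ∈ Finset.range m ×ˢ Finset.range n, l p) =
        (Finsupp.single 0 a + Finsupp.single 1 b) ∧
      l.support ⊆ Finset.range m ×ˢ Finset.range n) ∧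
    (∀ p ∈ Finset.range m ×ˢ Finset.range n,
      (l p) 1 = (p.1 + p.2 + 1) * (l p) 0) := by
  classical
  simp only [Tfin, Finset.mem_filter, Finset.mem_finsuppAntidiag]

lemma eval_0 (x y : ℕ) :
    ((Finsupp.single (0 : Fin 2) x + Finsupp.single 1 y) : Fin 2 →₀ ℕ) 0 = x := by
  simp [Finsupp.single_apply]

lemma eval_1 (x y : ℕ) :
    ((Finsupp.single (0 : Fin 2) x + Finsupp.single 1 y) : Fin 2 →₀ ℕ) 1 = y := by
  simp [Finsupp.single_apply]

/-- backward map: matrices to finsupp decompositions -/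
noncomputable def toL (c : Fin n × Fin m → ℕ) : (ℕ × ℕ) →₀ (Fin 2 →₀ ℕ) :=
  Finsupp.onFinset (Finset.range m ×ˢ Finset.range n)
    (fun p => if h : p.1 < m ∧ p.2 < n then
        Finsupp.single 0 (c (⟨p.2, h.2⟩, ⟨p.1, h.1⟩)) +
        Finsupp.single 1 ((p.1 + p.2 + 1) * c (⟨p.2, h.2⟩, ⟨p.1, h.1⟩)) else 0)
    (fun p hp => by
      simp only [Finset.mem_product, Finset.mem_range]
      by_contra h
      exact hp (dif_neg h))

lemma toL_apply (c : Fin n × Fin m → ℕ) (p : ℕ × ℕ) :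
    toL n m c p = if h : p.1 < m ∧ p.2 < n then
        Finsupp.single 0 (c (⟨p.2, h.2⟩, ⟨p.1, h.1⟩)) +
        Finsupp.single 1 ((p.1 + p.2 + 1) * c (⟨p.2, h.2⟩, ⟨p.1, h.1⟩)) else 0 := rfl

noncomputable def countEquiv : ↥(Tfin n m a b) ≃
    {c : Fin n × Fin m → ℕ //
      (∑ p : Fin n × Fin m, c p) = a ∧
      (∑ p : Fin n × Fin m, c p * (↑p.1 + ↑p.2 + 1)) = b} where
  toFun l := ⟨fun p => (l.1 (↑p.2, ↑p.1)) 0, by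
      obtain ⟨⟨hsum, hsupp⟩, hlin⟩ := (mem_Tfin n m a b l.1).1 l.2
      have h1 : ∑ p ∈ Finset.range m ×ˢ Finset.range n, (l.1 p) 0 =
          ∑ p : Fin n × Fin m, (l.1 (↑p.2, ↑p.1)) 0 := by
        rw [sum_transfer n m (fun v r => (l.1 (v, r)) 0)]
      rw [← h1, ← Finsupp.finset_sum_apply, hsum, eval_0], by
      obtain ⟨⟨hsum, hsupp⟩, hlin⟩ := (mem_Tfin n m a b l.1).1 l.2
      have h2 : ∀ p ∈ Finset.range m ×ˢ Finset.range n,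
          (l.1 p) 1 = (l.1 (p.1, p.2)) 0 * (p.1 + p.2 + 1) := by
        intro p hp
        rw [hlin p hp, mul_comm]
      have h1 : ∑ p ∈ Finset.range m ×ˢ Finset.range n, (l.1 p) 1 =
          ∑ p : Fin n × Fin m, (l.1 (↑p.2, ↑p.1)) 0 * (↑p.1 + ↑p.2 + 1) := by
        rw [Finset.sum_congr rfl h2,
          sum_transfer n m (fun v r => (l.1 (v, r)) 0 * (v + r + 1))]
        apply Finset.sum_congr rfl
        intro p _
        ring_nf
      rw [← h1, ← Finsupp.finset_sum_apply, hsum, eval_1]⟩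
  invFun c := ⟨toL n m c.1, (mem_Tfin n m a b _).2 ⟨⟨by
      apply finsupp_fin2_ext
      · rw [Finsupp.finset_sum_apply, eval_0]
        have h1 : ∑ p ∈ Finset.range m ×ˢ Finset.range n, (toL n m c.1 p) 0 =
            ∑ p : Fin n × Fin m, c.1 p := by
          rw [sum_transfer n m (fun v r => (toL n m c.1 (v, r)) 0)]
          apply Finset.sum_congr rfl
          rintro ⟨r, v⟩ _
          rw [toL_apply, dif_pos ⟨v.isLt, r.isLt⟩, eval_0]
        rw [h1, c.2.1]
      · rw [Finsupp.finset_sum_apply, eval_1]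
        have h1 : ∑ p ∈ Finset.range m ×ˢ Finset.range n, (toL n m c.1 p) 1 =
            ∑ p : Fin n × Fin m, c.1 p * (↑p.1 + ↑p.2 + 1) := by
          rw [sum_transfer n m (fun v r => (toL n m c.1 (v, r)) 1)]
          apply Finset.sum_congr rfl
          rintro ⟨r, v⟩ _
          rw [toL_apply, dif_pos ⟨v.isLt, r.isLt⟩, eval_1]
          simp only [Fin.eta]
          ring_nf
        rw [h1, c.2.2],
      Finsupp.support_onFinset_subset⟩, by
      intro p hp
      simp only [Finset.mem_product, Finset.mem_range] at hp
      rw [toL_apply, dif_pos ⟨hp.1, hp.2⟩, eval_0, eval_1]⟩⟩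
  left_inv := by
    rintro ⟨l, hl⟩
    obtain ⟨⟨hsum, hsupp⟩, hlin⟩ := (mem_Tfin n m a b l).1 hl
    apply Subtype.ext
    show toL n m _ = l
    apply Finsupp.ext
    intro p
    rw [toL_apply]
    by_cases h : p.1 < m ∧ p.2 < n
    · rw [dif_pos h]
      have hps : p ∈ Finset.range m ×ˢ Finset.range n := by
        simp only [Finset.mem_product, Finset.mem_range]; exact h
      have hl1 := hlin p hps
      apply finsupp_fin2_ext
      · rw [eval_0]
      · rw [eval_1, hl1]
    · rw [dif_neg h]
      symm
      apply Finsupp.notMem_support_iff.1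
      intro hc
      have := hsupp hc
      simp only [Finset.mem_product, Finset.mem_range] at this
      exact h this
  right_inv := by
    rintro ⟨c, hc⟩
    apply Subtype.ext
    funext p
    show (toL n m c (↑p.2, ↑p.1)) 0 = c p
    rw [toL_apply, dif_pos ⟨p.2.isLt, p.1.isLt⟩, eval_0]

end FinalEquiv

/-- Coefficient-wise form of
`Σ_{π ∈ PP(∞,n,m)} t^{des(π)} q^{|π|_{uh}} = Π_{i=1}^m Π_{j=1}^n (1 - t q^{i+j-1})⁻¹`
(in variables `t = X 0`, `q = X 1`). -/
theorem uphook_gen_fun (n m a b : ℕ) :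
    MvPowerSeries.coeff (Finsupp.single 0 a + Finsupp.single 1 b : Fin 2 →₀ ℕ)
      (∏ i ∈ Finset.range m, ∏ j ∈ Finset.range n,
        (1 - MvPowerSeries.X 0 * (MvPowerSeries.X 1) ^ (i + j + 1) :
          MvPowerSeries (Fin 2) ℚ)⁻¹) =
    Nat.card {π : PlanePartition // π.RowsLE n ∧ π.EntriesLE m ∧
      π.des = a ∧ π.uhvol = b} := by
  rw [coeff_eq_card n m a b]
  have key : (Tfin n m a b).card =
      Nat.card {π : PlanePartition // π.RowsLE n ∧ π.EntriesLE m ∧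
        π.des = a ∧ π.uhvol = b} := by
    calc (Tfin n m a b).card = Nat.card ↥(Tfin n m a b) :=
          (Nat.card_eq_finsetCard _).symm
      _ = Nat.card {c : Fin n × Fin m → ℕ //
            (∑ p : Fin n × Fin m, c p) = a ∧
            (∑ p : Fin n × Fin m, c p * (↑p.1 + ↑p.2 + 1)) = b} :=
          Nat.card_congr (countEquiv n m a b)
      _ = _ := (Nat.card_congr (mainEquiv n m a b)).symm
  rw [key]
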